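/- Let {I_n : n ∈ ω} be a partition of ω into finite sets with |I_n| > n · Σ_{m<n} |I_m| for all n, and let 𝓑 = {B ⊆ ω : ∀n, |I_n \ B| ≤ Σ_{m<n} |I_m|}. Then 𝓑 is a centered family (every finite subfamily has infinite intersection), and moreover for every infinite A ⊆ ω the set ∪_{n∈A} I_n has infinite intersection with every finite intersection of members of 𝓑. -/

import Mathlib

lemma ncard_biUnion_le {α β : Type*} (S : Finset α) (f : α → Set β) :
    (⋃ a ∈ S, f a).ncard ≤ ∑ a ∈ S, (f a).ncard := by
  classical
  induction S using Finset.induction with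
  | empty => simp
  | @insert a s h ih =>
    rw [Finset.sum_insert h, Finset.set_biUnion_insert]
    exact (Set.ncard_union_le _ _).trans (Nat.add_le_add_left ih _)

/-- Let `{I_n}` be a partition of `ω` into finite sets with
`|I_n| > n · Σ_{m<n} |I_m|`, and let `𝓑` be the family of `B ⊆ ω` with
`|I_n \ B| ≤ Σ_{m<n} |I_m|` for all `n`. Then `𝓑` is centered (finite
subfamilies have infinite intersection), and for every infinite `A ⊆ ω` the set
`⋃_{n∈A} I_n` has infinite intersection with every finite intersection of
members of `𝓑`. -/
theorem stmt10 (I : ℕ → Finset ℕ)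
    (hdisj : ∀ m n, m ≠ n → Disjoint (I m) (I n))
    (hcover : ∀ k : ℕ, ∃ n, k ∈ I n)
    (hgrow : ∀ n, (I n).card > n * ∑ m ∈ Finset.range n, (I m).card) :
    (∀ S : Finset (Set ℕ),
      (∀ B ∈ S, ∀ n, ((I n : Set ℕ) \ B).ncard ≤ ∑ m ∈ Finset.range n, (I m).card) →
      (⋂ B ∈ S, B).Infinite) ∧
    (∀ A : Set ℕ, A.Infinite → ∀ S : Finset (Set ℕ),
      (∀ B ∈ S, ∀ n, ((I n : Set ℕ) \ B).ncard ≤ ∑ m ∈ Finset.range n, (I m).card) →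
      ((⋃ n ∈ A, (I n : Set ℕ)) ∩ ⋂ B ∈ S, B).Infinite) := by
  have key : ∀ S : Finset (Set ℕ),
      (∀ B ∈ S, ∀ n, ((I n : Set ℕ) \ B).ncard ≤ ∑ m ∈ Finset.range n, (I m).card) →
      ∀ n, S.card ≤ n → ∃ x, x ∈ I n ∧ x ∈ ⋂ B ∈ S, B := by
    intro S hS n hn
    by_contra h
    push_neg at h
    have hsub : (I n : Set ℕ) ⊆ ⋃ B ∈ S, ((I n : Set ℕ) \ B) := by
      intro x hx
      have := h x hx
      simp only [Set.mem_iInter] at this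
      push_neg at this
      obtain ⟨B, hB, hxB⟩ := this
      exact Set.mem_biUnion hB ⟨hx, hxB⟩
    have h1 : (I n).card ≤ ∑ B ∈ S, ((I n : Set ℕ) \ B).ncard := by
      calc (I n).card = ((I n : Set ℕ)).ncard := (Set.ncard_coe_finset _).symm
        _ ≤ (⋃ B ∈ S, ((I n : Set ℕ) \ B)).ncard :=
            Set.ncard_le_ncard hsub (Set.Finite.biUnion S.finite_toSet
              (fun B _ => ((I n).finite_toSet).diff))
        _ ≤ _ := ncard_biUnion_le S _
    have h2 : ∑ B ∈ S, ((I n : Set ℕ) \ B).ncard ≤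
        S.card * ∑ m ∈ Finset.range n, (I m).card := by
      calc ∑ B ∈ S, ((I n : Set ℕ) \ B).ncard
            ≤ ∑ _B ∈ S, ∑ m ∈ Finset.range n, (I m).card :=
              Finset.sum_le_sum (fun B hB => hS B hB n)
          _ = S.card * ∑ m ∈ Finset.range n, (I m).card := by
              rw [Finset.sum_const, smul_eq_mul]
    have h3 : S.card * ∑ m ∈ Finset.range n, (I m).card ≤
        n * ∑ m ∈ Finset.range n, (I m).card :=
      Nat.mul_le_mul_right _ hn
    exact absurd (h1.trans (h2.trans h3)) (Nat.not_le.mpr (hgrow n))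
  constructor
  · intro S hS
    choose f hf1 hf2 using fun n => key S hS (n + S.card) (Nat.le_add_left _ _)
    apply Set.infinite_of_injective_forall_mem (f := f) ?_ hf2
    intro a b hab
    by_contra hne
    have hne' : a + S.card ≠ b + S.card := by omega
    exact Finset.disjoint_left.mp (hdisj _ _ hne') (hf1 a)
      (by rw [hab]; exact hf1 b)
  · intro A hA S hS
    have hA' : {n | n ∈ A ∧ S.card ≤ n}.Infinite := by
      have : A \ {n | n < S.card} ⊆ {n | n ∈ A ∧ S.card ≤ n} := by
        intro n hn; exact ⟨hn.1, Nat.not_lt.mp hn.2⟩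
      exact ((hA.diff (Set.finite_Iio S.card)).mono this)
    haveI : Infinite {n | n ∈ A ∧ S.card ≤ n} := hA'.to_subtype
    choose f hf1 hf2 using fun n : {n | n ∈ A ∧ S.card ≤ n} =>
      key S hS n n.2.2
    apply Set.infinite_of_injective_forall_mem (f := f) ?_ ?_
    · intro a b hab
      by_contra hne
      have hne' : (a : ℕ) ≠ (b : ℕ) := fun h => hne (Subtype.ext h)
      exact Finset.disjoint_left.mp (hdisj _ _ hne') (hf1 a)
        (by rw [hab]; exact hf1 b)
    · intro n
      exact ⟨Set.mem_biUnion n.2.1 (hf1 n), hf2 n⟩
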